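/- Induction rule for acc-relative indexical common knowledge: let φ, ψ : Point → Prop. Suppose that for every agent i and every point p, if i ∈ H p, ψ p, and acc p hold then (Y (E_H^{acc} (fun q => φ q ∧ ψ q))) p holds. Then for every agent i and every point p, if i ∈ H p, ψ p, and acc p hold then (C_H^{Y,acc} φ) p holds. -/
import Mathlib


/-- The simple modal operator induced by the relation `Y`. -/
def Yop {Point : Type*} (Y : Point → Point → Prop) (φ : Point → Prop) (p : Point) : Prop :=
  ∀ q, Y p q → φ q

/-- `acc`-guarded belief of agent `i` relative to the indexical set `H`:
`(B_i^{H,acc} φ) p := ∀ q, q ∼_i p → i ∈ H q → acc q → φ q`. -/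
def BopAcc {Point Agent : Type*} (H : Point → Set Agent) (acc : Point → Prop)
    (sim : Agent → Point → Point → Prop)
    (i : Agent) (φ : Point → Prop) (p : Point) : Prop :=
  ∀ q, sim i q p → i ∈ H q → acc q → φ q

/-- `(E_H^{acc} φ) p := ∀ i ∈ H p, (B_i^{H,acc} φ) p`. -/
def EopAcc {Point Agent : Type*} (H : Point → Set Agent) (acc : Point → Prop)
    (sim : Agent → Point → Point → Prop) (φ : Point → Prop) (p : Point) : Prop :=
  ∀ i ∈ H p, BopAcc H acc sim i φ p

/-- `(Y∘E_H^{acc})^n`, with `(Y∘E_H^{acc})^0 = id` and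
`(Y∘E_H^{acc})^{n+1} φ = Y (E_H^{acc} ((Y∘E_H^{acc})^n φ))`. -/
def YEiterAcc {Point Agent : Type*} (H : Point → Set Agent) (acc : Point → Prop)
    (sim : Agent → Point → Point → Prop)
    (Y : Point → Point → Prop) : ℕ → (Point → Prop) → (Point → Prop)
  | 0, φ => φ
  | n + 1, φ => Yop Y (EopAcc H acc sim (YEiterAcc H acc sim Y n φ))

/-- `acc`-relative indexical common knowledge:
`(C_H^{Y,acc} φ) p := ∀ n ≥ 1, ((Y∘E_H^{acc})^n φ) p`. -/
def CopAcc {Point Agent : Type*} (H : Point → Set Agent) (acc : Point → Prop)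
    (sim : Agent → Point → Point → Prop)
    (Y : Point → Point → Prop) (φ : Point → Prop) (p : Point) : Prop :=
  ∀ n, 1 ≤ n → YEiterAcc H acc sim Y n φ p

/-- A single `(H-Y-acc)`-reachability step: there are an agent `i` and a point `p'`
with `Y p p'`, `i ∈ H p'`, `i ∈ H q`, `acc q`, and `q ∼_i p'`. -/
def StepAcc {Point Agent : Type*} (H : Point → Set Agent) (acc : Point → Prop)
    (sim : Agent → Point → Point → Prop)
    (Y : Point → Point → Prop) (p q : Point) : Prop :=
  ∃ (i : Agent) (p' : Point), Y p p' ∧ i ∈ H p' ∧ i ∈ H q ∧ acc q ∧ sim i q p'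

/-- `q` is `(H-Y-acc)`-reachable from `p` in `k` steps. -/
def ReachNAcc {Point Agent : Type*} (H : Point → Set Agent) (acc : Point → Prop)
    (sim : Agent → Point → Point → Prop)
    (Y : Point → Point → Prop) : ℕ → Point → Point → Prop
  | 0, p, q => p = q
  | k + 1, p, q => ∃ mid, StepAcc H acc sim Y p mid ∧ ReachNAcc H acc sim Y k mid q

/-- Induction rule for `acc`-relative indexical common knowledge. -/
theorem induction_rule_acc {Point Agent : Type*} (H : Point → Set Agent)
    (acc : Point → Prop) (sim : Agent → Point → Point → Prop)
    (Y : Point → Point → Prop) (φ ψ : Point → Prop)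
    (hyp : ∀ (i : Agent) (p : Point), i ∈ H p → ψ p → acc p →
      Yop Y (EopAcc H acc sim (fun q => φ q ∧ ψ q)) p) :
    ∀ (i : Agent) (p : Point), i ∈ H p → ψ p → acc p → CopAcc H acc sim Y φ p := by
  have mono : ∀ (n : ℕ) (α β : Point → Prop), (∀ x, α x → β x) →
      ∀ p, YEiterAcc H acc sim Y n α p → YEiterAcc H acc sim Y n β p := by
    intro n
    induction n with
    | zero => intro α β hab p h; exact hab p h
    | succ n ih =>
      intro α β hab p h q hYq j hj r hr hjr haccr
      exact ih α β hab r (h q hYq j hj r hr hjr haccr)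
  have key : ∀ (n : ℕ), 1 ≤ n → ∀ (i : Agent) (p : Point), i ∈ H p → ψ p → acc p →
      YEiterAcc H acc sim Y n (fun q => φ q ∧ ψ q) p := by
    intro n
    induction n with
    | zero => intro h; omega
    | succ n ih =>
      intro _ i p hi hψ hacc
      rcases Nat.eq_zero_or_pos n with h0 | h1
      · subst h0
        exact hyp i p hi hψ hacc
      · intro q hYq j hj r hr hjr haccr
        have := hyp i p hi hψ hacc q hYq j hj r hr hjr haccr
        exact ih h1 j r hjr this.2 haccr
  intro i p hi hψ hacc n hn
  exact mono n _ φ (fun x hx => hx.1) p (key n hn i p hi hψ hacc)
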